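/- arXiv:2109.03370 — 9 statements merged into one kernel-verified Lean document; each statement's English description precedes it below -/
import Mathlib

section
/- (Milgrom–Shannon Monotone Selection Theorem.) Let A be a lattice, Θ a partially ordered set, and f : A × Θ → ℝ. Suppose f is quasisupermodular in a and satisfies the strict single crossing property in (a; θ). Then every selection from the argmax correspondence is nondecreasing: for all θ'' < θ' in Θ, if a'' maximizes f(·, θ'') over A and a' maximizes f(·, θ') over A, then a'' ≤ a'. -/
/-- Milgrom–Shannon Monotone Selection Theorem: if `f` is quasisupermodular in `a` and
satisfies the strict single crossing property in `(a; θ)`, then every selection from the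
argmax correspondence is nondecreasing. -/
theorem milgrom_shannon_monotone_selection
    {A : Type*} {Θ : Type*} [Lattice A] [PartialOrder Θ]
    (f : A → Θ → ℝ)
    (hqsm : ∀ (θ : Θ) (a b : A),
      (f a θ ≥ f (a ⊓ b) θ → f (a ⊔ b) θ ≥ f b θ) ∧
      (f a θ > f (a ⊓ b) θ → f (a ⊔ b) θ > f b θ))
    (hssc : ∀ a'' a' : A, a'' < a' → ∀ θ'' θ' : Θ, θ'' < θ' →
      f a' θ'' ≥ f a'' θ'' → f a' θ' > f a'' θ')
    (θ'' θ' : Θ) (hθ : θ'' < θ') (a'' a' : A)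
    (hmax'' : ∀ b : A, f b θ'' ≤ f a'' θ'')
    (hmax' : ∀ b : A, f b θ' ≤ f a' θ') :
    a'' ≤ a' := by
  by_contra h
  have h1 : f a'' θ'' ≥ f (a'' ⊓ a') θ'' := hmax'' _
  have h2 : f (a'' ⊔ a') θ'' ≥ f a' θ'' := (hqsm θ'' a'' a').1 h1
  have hlt : a' < a'' ⊔ a' := lt_of_le_of_ne le_sup_right
    (fun he => h (le_sup_left.trans he.ge))
  exact absurd (hmax' (a'' ⊔ a')) (not_le.mpr (hssc a' (a'' ⊔ a') hlt θ'' θ' hθ h2))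
end

section
/- (Lemma 1(i): monotonicity of the receiver's equilibrium strategy.) Let T, S, Z be linear orders and u : T × S × Z → ℝ be strictly decreasing in s and (weakly) increasing in t. Let σ : Z → S and τ : S → T be sender-optimal, i.e., u(τ(σ(z)), σ(z), z) ≥ u(τ(s), s, z) for every z ∈ Z and s ∈ S. Then for every z ∈ Z and every s ∈ S with s < σ(z), one has τ(s) < τ(σ(z)); in particular τ is strictly increasing on the range of σ. -/
/-- Lemma 1(i): in a pure-strategy PBE with sender utility strictly decreasing in the
action and weakly increasing in the reaction, the receiver's strategy is increasing:
`s < σ z` implies `τ s < τ (σ z)`; in particular `τ` is strictly increasing on the range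
of `σ`. -/
theorem receiver_strategy_monotone
    {T S Z : Type*} [LinearOrder T] [LinearOrder S] [LinearOrder Z]
    (u : T → S → Z → ℝ)
    (hs : ∀ (t : T) (z : Z), StrictAnti (fun s => u t s z))
    (ht : ∀ (s : S) (z : Z), Monotone (fun t => u t s z))
    (σ : Z → S) (τ : S → T)
    (hopt : ∀ (z : Z) (s : S), u (τ s) s z ≤ u (τ (σ z)) (σ z) z) :
    (∀ (z : Z) (s : S), s < σ z → τ s < τ (σ z)) ∧
      (∀ z₁ z₂ : Z, σ z₁ < σ z₂ → τ (σ z₁) < τ (σ z₂)) := by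
  have main : ∀ (z : Z) (s : S), s < σ z → τ s < τ (σ z) := by
    intro z s hlt
    by_contra h
    push_neg at h
    have h1 : u (τ (σ z)) (σ z) z < u (τ (σ z)) s z := hs (τ (σ z)) z hlt
    have h2 : u (τ (σ z)) s z ≤ u (τ s) s z := ht s z h
    exact absurd (hopt z s) (not_le.mpr (lt_of_lt_of_le h1 h2))
  exact ⟨main, fun z₁ z₂ h => main z₂ (σ z₁) h⟩
end

section
/- (Lemma 1(ii): monotonicity of the sender's equilibrium strategy.) Let T, S, Z be linear orders and u : T × S × Z → ℝ be monotone-supermodular (strictly decreasing in s, strictly increasing in t, and satisfying the strict single crossing property in ((t,s); z)). If σ : Z → S and τ : S → T are sender-optimal, then σ is monotone nondecreasing: z' < z implies σ(z') ≤ σ(z). -/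
/-- Lemma 1(ii): if the sender's utility is monotone-supermodular (strictly decreasing
in `s`, strictly increasing in `t`, and satisfying the strict single crossing property
in `((t,s); z)`), then in any pure-strategy PBE the sender's strategy `σ` is monotone
nondecreasing. -/
theorem sender_strategy_monotone
    {T S Z : Type*} [LinearOrder T] [LinearOrder S] [LinearOrder Z]
    (u : T → S → Z → ℝ)
    (hs : ∀ (t : T) (z : Z), StrictAnti (fun s => u t s z))
    (ht : ∀ (s : S) (z : Z), StrictMono (fun t => u t s z))
    (hssc : ∀ (t'' t' : T) (s'' s' : S), (t'', s'') < (t', s') →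
      ∀ z'' z' : Z, z'' < z' →
      u t' s' z'' ≥ u t'' s'' z'' → u t' s' z' > u t'' s'' z')
    (σ : Z → S) (τ : S → T)
    (hopt : ∀ (z : Z) (s : S), u (τ s) s z ≤ u (τ (σ z)) (σ z) z) :
    Monotone σ := by
  intro z'' z' hz
  rcases eq_or_lt_of_le hz with rfl | hlt
  · exact le_rfl
  by_contra hcon
  push_neg at hcon
  -- σ z' < σ z''
  rcases le_or_gt (τ (σ z')) (τ (σ z'')) with hτ | hτ
  · -- (τ (σ z'), σ z') < (τ (σ z''), σ z'')
    have hp : ((τ (σ z')), σ z') < ((τ (σ z'')), σ z'') :=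
      Prod.mk_lt_mk.2 (Or.inr ⟨hτ, hcon⟩)
    have h1 : u (τ (σ z'')) (σ z'') z'' ≥ u (τ (σ z')) (σ z') z'' := hopt z'' (σ z')
    have h2 := hssc (τ (σ z')) (τ (σ z'')) (σ z') (σ z'') hp z'' z' hlt h1
    exact absurd (hopt z' (σ z'')) (not_le.2 h2)
  · have h1 : u (τ (σ z'')) (σ z') z'' < u (τ (σ z')) (σ z') z'' := ht (σ z') z'' hτ
    have h2 : u (τ (σ z'')) (σ z'') z'' < u (τ (σ z'')) (σ z') z'' := hs (τ (σ z'')) z'' hcon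
    exact absurd (hopt z'' (σ z')) (not_le.2 (h2.trans h1))
end

section
/- (Upward-deviation dominance; Case 2 in the proof of Proposition 1.) Let T, S, Z be linear orders, u : T × S × Z → ℝ monotone-supermodular (strictly decreasing in s, weakly increasing in t, and satisfying the strict single crossing property in ((t,s); z)), and let σ : Z → S, τ : S → T be sender-optimal with equilibrium utility U(z) := u(τ(σ(z)), σ(z), z). Then for all z', z'' ∈ Z with z' < z'', every s ∈ S with s > σ(z''), and every t ∈ T: if u(t, s, z') ≥ U(z'), then u(t, s, z'') > U(z''). -/
/-- Upward-deviation dominance (Case 2 in the proof of Proposition 1): for `z' < z''` and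
an action `s > σ z''`, if type `z'` weakly gains by deviating to `(t, s)` then type `z''`
strictly gains. -/
theorem upward_deviation_dominance
    {T S Z : Type*} [LinearOrder T] [LinearOrder S] [LinearOrder Z]
    (u : T → S → Z → ℝ)
    (hs : ∀ (t : T) (z : Z), StrictAnti (fun s => u t s z))
    (ht : ∀ (s : S) (z : Z), Monotone (fun t => u t s z))
    (hssc : ∀ (t'' t' : T) (s'' s' : S), (t'', s'') < (t', s') →
      ∀ z'' z' : Z, z'' < z' →
      u t' s' z'' ≥ u t'' s'' z'' → u t' s' z' > u t'' s'' z')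
    (σ : Z → S) (τ : S → T)
    (hopt : ∀ (z : Z) (s : S), u (τ s) s z ≤ u (τ (σ z)) (σ z) z)
    (U : Z → ℝ) (hU : ∀ z, U z = u (τ (σ z)) (σ z) z) :
    ∀ z' z'' : Z, z' < z'' → ∀ s : S, σ z'' < s → ∀ t : T,
      u t s z' ≥ U z' → u t s z'' > U z'' := by
  intro z' z'' hz s hσs t hdev
  -- Equilibrium of z' beats mimicking z''
  have hkey : u t s z' ≥ u (τ (σ z'')) (σ z'') z' := by
    calc u t s z' ≥ U z' := hdev
    _ = u (τ (σ z')) (σ z') z' := hU z'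
    _ ≥ u (τ (σ z'')) (σ z'') z' := hopt z' (σ z'')
  -- First show t ≥ τ (σ z'')
  have htge : τ (σ z'') ≤ t := by
    by_contra h
    push_neg at h
    have h1 : u t (σ z'') z' ≤ u (τ (σ z'')) (σ z'') z' := ht (σ z'') z' h.le
    have h2 : u t s z' < u t (σ z'') z' := hs t z' hσs
    linarith
  have hlt : ((τ (σ z''), σ z'') : T × S) < (t, s) :=
    Prod.lt_iff.mpr (Or.inr ⟨htge, hσs⟩)
  have := hssc (τ (σ z'')) t (σ z'') s hlt z' z'' hz hkey
  rw [hU]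
  exact this
end

section
/- (Downward-deviation dominance; Case 1 in the proof of Proposition 1.) Let T, S, Z be linear orders, u : T × S × Z → ℝ monotone-supermodular (strictly decreasing in s, weakly increasing in t, and satisfying the strict single crossing property in ((t,s); z)), and let σ : Z → S, τ : S → T be sender-optimal with equilibrium utility U(z) := u(τ(σ(z)), σ(z), z). Then for all z'', z' ∈ Z with z'' < z', every s ∈ S with s < σ(z''), and every t ∈ T: if u(t, s, z'') ≤ U(z''), then u(t, s, z') < U(z'). -/
/-- Downward-deviation dominance (Case 1 in the proof of Proposition 1): for `z'' < z'`
and an action `s < σ z''`, if type `z''` weakly loses by deviating to `(t, s)` then type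
`z'` strictly loses. -/
theorem downward_deviation_dominance
    {T S Z : Type*} [LinearOrder T] [LinearOrder S] [LinearOrder Z]
    (u : T → S → Z → ℝ)
    (hs : ∀ (t : T) (z : Z), StrictAnti (fun s => u t s z))
    (ht : ∀ (s : S) (z : Z), Monotone (fun t => u t s z))
    (hssc : ∀ (t'' t' : T) (s'' s' : S), (t'', s'') < (t', s') →
      ∀ z'' z' : Z, z'' < z' →
      u t' s' z'' ≥ u t'' s'' z'' → u t' s' z' > u t'' s'' z')
    (σ : Z → S) (τ : S → T)
    (hopt : ∀ (z : Z) (s : S), u (τ s) s z ≤ u (τ (σ z)) (σ z) z)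
    (U : Z → ℝ) (hU : ∀ z, U z = u (τ (σ z)) (σ z) z) :
    ∀ z'' z' : Z, z'' < z' → ∀ s : S, s < σ z'' → ∀ t : T,
      u t s z'' ≤ U z'' → u t s z' < U z' := by
  intro z'' z' hz s hslt t hle
  rcases le_or_gt t (τ (σ z'')) with htle | htgt
  · have hlt : ((t, s) : T × S) < (τ (σ z''), σ z'') :=
      Prod.lt_iff.mpr (Or.inr ⟨htle, hslt⟩)
    have h1 : u (τ (σ z'')) (σ z'') z'' ≥ u t s z'' := by
      rw [hU] at hle; exact hle
    have h2 := hssc t (τ (σ z'')) s (σ z'') hlt z'' z' hz h1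
    have h3 : u (τ (σ z'')) (σ z'') z' ≤ U z' := by
      rw [hU]; exact hopt z' (σ z'')
    linarith
  · exfalso
    have h1 : u (τ (σ z'')) s z'' ≤ u t s z'' := ht s z'' htgt.le
    have h2 : u (τ (σ z'')) (σ z'') z'' < u (τ (σ z'')) s z'' :=
      hs (τ (σ z'')) z'' hslt
    rw [hU] at hle
    linarith
end

section
/- (Proposition 1, item 1: D1 pins down the belief at off-path actions created by a discontinuity of σ.) Let T, S be linear orders, Z a densely ordered linear order, u : T × S × Z → ℝ monotone-supermodular, and σ : Z → S, τ : S → T sender-optimal with equilibrium utility U(z) := u(τ(σ(z)), σ(z), z). Suppose z ∈ Z and s ∈ S satisfy: s is not in the range of σ, s < σ(z), and σ(k) ≤ s for every k < z (i.e., s lies in the off-path gap created by the discontinuity of σ at z). Then every type z₀ ≠ z is D1-dominated at s: there exists z' ∈ Z such that for every t ∈ T, u(t, s, z₀) ≥ U(z₀) implies u(t, s, z') > U(z'). Consequently, any belief at s passing Criterion D1 has support contained in {z}. -/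
/-- Proposition 1, item 1: at an off-path action `s` created by a discontinuity of `σ`
at `z`, every type `z₀ ≠ z` is D1-dominated at `s`; consequently any belief at `s`
passing Criterion D1 has support contained in `{z}`. -/
theorem D1_belief_at_discontinuity_gap
    {T S Z : Type*} [LinearOrder T] [LinearOrder S] [LinearOrder Z] [DenselyOrdered Z]
    (u : T → S → Z → ℝ)
    (hs : ∀ (t : T) (z : Z), StrictAnti (fun s => u t s z))
    (ht : ∀ (s : S) (z : Z), StrictMono (fun t => u t s z))
    (hz : ∀ (t : T) (s : S), StrictMono (fun z => u t s z))
    (hssc : ∀ (t'' t' : T) (s'' s' : S), (t'', s'') < (t', s') →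
      ∀ z'' z' : Z, z'' < z' →
      u t' s' z'' ≥ u t'' s'' z'' → u t' s' z' > u t'' s'' z')
    (σ : Z → S) (τ : S → T)
    (hopt : ∀ (z : Z) (s : S), u (τ s) s z ≤ u (τ (σ z)) (σ z) z)
    (U : Z → ℝ) (hU : ∀ z, U z = u (τ (σ z)) (σ z) z)
    (z : Z) (s : S)
    (hoff : s ∉ Set.range σ) (hlt : s < σ z) (hgap : ∀ k : Z, k < z → σ k ≤ s) :
    (∀ z₀ : Z, z₀ ≠ z → ∃ z' : Z, ∀ t : T, u t s z₀ ≥ U z₀ → u t s z' > U z') ∧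
    (∀ P : Set Z,
      (∀ Z' : Set Z, Z'.Nonempty →
        (∀ w ∉ Z', ∃ z' : Z, ∀ t : T, u t s w ≥ U w → u t s z' > U z') → P ⊆ Z') →
      P ⊆ {z}) := by
  have main : ∀ z₀ : Z, z₀ ≠ z → ∃ z' : Z, ∀ t : T, u t s z₀ ≥ U z₀ → u t s z' > U z' := by
    intro z₀ hne
    rcases lt_or_gt_of_ne hne with hlt₀ | hgt₀
    · -- z₀ < z : pick z' strictly between, witness z'
      obtain ⟨z', hz₀z', hz'z⟩ := exists_between hlt₀
      refine ⟨z', fun t hdev => ?_⟩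
      have hσz' : σ z' < s :=
        lt_of_le_of_ne (hgap z' hz'z) (fun h => hoff ⟨z', h⟩)
      have hIC : u (τ (σ z')) (σ z') z₀ ≤ U z₀ := by
        rw [hU]; exact hopt z₀ (σ z')
      have ht' : τ (σ z') ≤ t := by
        by_contra hc
        push_neg at hc
        have h1 : u t s z₀ < u (τ (σ z')) s z₀ := ht s z₀ hc
        have h2 : u (τ (σ z')) s z₀ < u (τ (σ z')) (σ z') z₀ := hs _ z₀ hσz'
        linarith
      have hpair : ((τ (σ z'), σ z') : T × S) < (t, s) :=
        Prod.mk_lt_mk.2 (Or.inr ⟨ht', hσz'⟩)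
      have hres := hssc (τ (σ z')) t (σ z') s hpair z₀ z' hz₀z' (le_trans hIC hdev)
      rw [hU]; exact hres
    · -- z < z₀ : witness z itself
      refine ⟨z, fun t hdev => ?_⟩
      rcases le_or_gt (τ (σ z)) t with htt | htt
      · have h1 : u (τ (σ z)) (σ z) z < u (τ (σ z)) s z := hs _ z hlt
        have h2 : u (τ (σ z)) s z ≤ u t s z := (ht s z).monotone htt
        rw [hU]; linarith
      · have hIC : u (τ (σ z)) (σ z) z₀ ≤ U z₀ := by
          rw [hU]; exact hopt z₀ (σ z)
        have hpair : ((t, s) : T × S) < (τ (σ z), σ z) :=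
          Prod.mk_lt_mk.2 (Or.inl ⟨htt, le_of_lt hlt⟩)
        by_contra hc
        push_neg at hc
        rw [hU] at hc
        have hres := hssc t (τ (σ z)) s (σ z) hpair z z₀ hgt₀ hc
        linarith
  refine ⟨main, fun P hP => ?_⟩
  exact hP {z} ⟨z, rfl⟩ (fun w hw => main w (by simpa using hw))
end

section
/- (Proposition 1, item 2: D1 belief above the top of the action range.) Let T, S be linear orders, Z a linear order with a greatest element z̄, u : T × S × Z → ℝ monotone-supermodular, and σ : Z → S, τ : S → T sender-optimal with equilibrium utility U(z) := u(τ(σ(z)), σ(z), z). If s ∈ S satisfies s > σ(z̄), then every type z₀ < z̄ is D1-dominated at s by z̄: for every t ∈ T, u(t, s, z₀) ≥ U(z₀) implies u(t, s, z̄) > U(z̄). Consequently, any belief at s passing Criterion D1 has support contained in {z̄}. -/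
/-- Proposition 1, item 2: at an off-path action `s > σ z̄` above the top of the action
range, every type `z₀ < z̄` is D1-dominated at `s` by the greatest type `z̄`;
consequently any belief at `s` passing Criterion D1 has support contained in `{z̄}`. -/
theorem D1_belief_above_top
    {T S Z : Type*} [LinearOrder T] [LinearOrder S] [LinearOrder Z]
    (u : T → S → Z → ℝ)
    (hs : ∀ (t : T) (z : Z), StrictAnti (fun s => u t s z))
    (ht : ∀ (s : S) (z : Z), StrictMono (fun t => u t s z))
    (hz : ∀ (t : T) (s : S), StrictMono (fun z => u t s z))
    (hssc : ∀ (t'' t' : T) (s'' s' : S), (t'', s'') < (t', s') →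
      ∀ z'' z' : Z, z'' < z' →
      u t' s' z'' ≥ u t'' s'' z'' → u t' s' z' > u t'' s'' z')
    (σ : Z → S) (τ : S → T)
    (hopt : ∀ (z : Z) (s : S), u (τ s) s z ≤ u (τ (σ z)) (σ z) z)
    (U : Z → ℝ) (hU : ∀ z, U z = u (τ (σ z)) (σ z) z)
    (zbar : Z) (htopel : ∀ z : Z, z ≤ zbar)
    (s : S) (hlt : σ zbar < s) :
    (∀ z₀ : Z, z₀ < zbar → ∀ t : T, u t s z₀ ≥ U z₀ → u t s zbar > U zbar) ∧
    (∀ P : Set Z,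
      (∀ Z' : Set Z, Z'.Nonempty →
        (∀ w ∉ Z', ∃ z' : Z, ∀ t : T, u t s w ≥ U w → u t s z' > U z') → P ⊆ Z') →
      P ⊆ {zbar}) := by
  have main : ∀ z₀ : Z, z₀ < zbar → ∀ t : T, u t s z₀ ≥ U z₀ → u t s zbar > U zbar := by
    intro z₀ hz₀ t hge
    have h1 : u (τ (σ zbar)) (σ zbar) z₀ ≤ U z₀ := by rw [hU]; exact hopt z₀ (σ zbar)
    have h2 : u t s z₀ ≥ u (τ (σ zbar)) (σ zbar) z₀ := le_trans h1 hge
    have htt : τ (σ zbar) ≤ t := by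
      by_contra hcon
      push_neg at hcon
      have : u t s z₀ < u (τ (σ zbar)) (σ zbar) z₀ :=
        lt_trans (ht s z₀ hcon) (hs (τ (σ zbar)) z₀ hlt)
      exact absurd h2 (not_le.mpr this)
    have hp : ((τ (σ zbar), σ zbar) : T × S) < (t, s) :=
      Prod.mk_lt_mk.mpr (Or.inr ⟨htt, hlt⟩)
    have := hssc (τ (σ zbar)) t (σ zbar) s hp z₀ zbar hz₀ h2
    rw [hU]
    exact this
  refine ⟨main, ?_⟩
  intro P hP
  refine hP {zbar} ⟨zbar, rfl⟩ ?_
  intro w hw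
  have hwlt : w < zbar := lt_of_le_of_ne (htopel w) (by simpa using hw)
  exact ⟨zbar, main w hwlt⟩
end

section
/- (Proposition 1, item 3: D1 belief below the bottom of the action range.) Let T, S be linear orders, Z a linear order with a least element z̲, u : T × S × Z → ℝ monotone-supermodular, and σ : Z → S, τ : S → T sender-optimal with equilibrium utility U(z) := u(τ(σ(z)), σ(z), z). If s ∈ S satisfies s < σ(z̲), then every type z₀ > z̲ is D1-dominated at s by z̲: for every t ∈ T, u(t, s, z₀) ≥ U(z₀) implies u(t, s, z̲) > U(z̲). Consequently, any belief at s passing Criterion D1 has support contained in {z̲}. -/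
/-- Proposition 1, item 3: at an off-path action `s < σ z̲` below the bottom of the
action range, every type `z₀ > z̲` is D1-dominated at `s` by the least type `z̲`;
consequently any belief at `s` passing Criterion D1 has support contained in `{z̲}`. -/
theorem D1_belief_below_bottom
    {T S Z : Type*} [LinearOrder T] [LinearOrder S] [LinearOrder Z]
    (u : T → S → Z → ℝ)
    (hs : ∀ (t : T) (z : Z), StrictAnti (fun s => u t s z))
    (ht : ∀ (s : S) (z : Z), StrictMono (fun t => u t s z))
    (hz : ∀ (t : T) (s : S), StrictMono (fun z => u t s z))
    (hssc : ∀ (t'' t' : T) (s'' s' : S), (t'', s'') < (t', s') →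
      ∀ z'' z' : Z, z'' < z' →
      u t' s' z'' ≥ u t'' s'' z'' → u t' s' z' > u t'' s'' z')
    (σ : Z → S) (τ : S → T)
    (hopt : ∀ (z : Z) (s : S), u (τ s) s z ≤ u (τ (σ z)) (σ z) z)
    (U : Z → ℝ) (hU : ∀ z, U z = u (τ (σ z)) (σ z) z)
    (zlow : Z) (hbotel : ∀ z : Z, zlow ≤ z)
    (s : S) (hlt : s < σ zlow) :
    (∀ z₀ : Z, zlow < z₀ → ∀ t : T, u t s z₀ ≥ U z₀ → u t s zlow > U zlow) ∧
    (∀ P : Set Z,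
      (∀ Z' : Set Z, Z'.Nonempty →
        (∀ w ∉ Z', ∃ z' : Z, ∀ t : T, u t s w ≥ U w → u t s z' > U z') → P ⊆ Z') →
      P ⊆ {zlow}) := by

  have main : ∀ z₀ : Z, zlow < z₀ → ∀ t : T, u t s z₀ ≥ U z₀ → u t s zlow > U zlow := by
    intro z₀ hz₀ t hge
    rcases le_or_gt t (τ (σ zlow)) with hle | hgt
    · by_contra hcon
      push_neg at hcon
      rw [hU] at hcon
      have hprod : (t, s) < (τ (σ zlow), σ zlow) := Prod.lt_iff.mpr (Or.inr ⟨hle, hlt⟩)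
      have h3 := hssc t (τ (σ zlow)) s (σ zlow) hprod zlow z₀ hz₀ hcon
      have h2 : u (τ (σ zlow)) (σ zlow) z₀ ≤ U z₀ := by
        rw [hU]; exact hopt z₀ (σ zlow)
      linarith
    · have h1 : u (τ (σ zlow)) s zlow < u t s zlow := ht s zlow hgt
      have h2 : u (τ (σ zlow)) (σ zlow) zlow < u (τ (σ zlow)) s zlow := hs _ zlow hlt
      rw [hU]; linarith
  refine ⟨main, ?_⟩
  intro P hP
  exact hP {zlow} ⟨zlow, rfl⟩ (fun w hw => ⟨zlow, main w (lt_of_le_of_ne (hbotel w) (fun h => hw h.symm))⟩)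
end

section
/- (Lemma A: uniqueness of the bottom match.) Let S, Z, X be linear orders, n : Z → X strictly increasing, v : X × S × Z → ℝ nondecreasing in s, strictly increasing in x, and nondecreasing in z, and c : S × Z → ℝ strictly increasing in s and strictly decreasing in z. Then for any t_ℓ ∈ ℝ, the system of equations v(n(z), s, z) = t_ℓ and c(s, z) = t_ℓ has at most one solution (s, z) ∈ S × Z. -/
/-- Key step: no solution pair can have strictly smaller `z` than another. -/
private lemma bottom_match_aux
    {S Z X : Type*} [LinearOrder S] [LinearOrder Z] [LinearOrder X]
    (n : Z → X) (hn : StrictMono n)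
    (v : X → S → Z → ℝ)
    (hvs : ∀ (x : X) (z : Z), Monotone (fun s => v x s z))
    (hvx : ∀ (s : S) (z : Z), StrictMono (fun x => v x s z))
    (hvz : ∀ (x : X) (s : S), Monotone (fun z => v x s z))
    (c : S → Z → ℝ)
    (hcs : ∀ z : Z, StrictMono (fun s => c s z))
    (hcz : ∀ s : S, StrictAnti (fun z => c s z))
    (tl : ℝ) (s1 s2 : S) (z1 z2 : Z)
    (h1v : v (n z1) s1 z1 = tl) (h1c : c s1 z1 = tl)
    (h2v : v (n z2) s2 z2 = tl) (h2c : c s2 z2 = tl)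
    (hz : z1 < z2) : False := by
  have hs : s1 < s2 := by
    by_contra h
    push_neg at h
    have h3 : c s2 z2 < c s2 z1 := hcz s2 hz
    have h4 : c s2 z1 ≤ c s1 z1 := (hcs z1).monotone h
    linarith [h1c, h2c]
  have h5 : v (n z1) s1 z1 < v (n z2) s1 z1 := hvx s1 z1 (hn hz)
  have h6 : v (n z2) s1 z1 ≤ v (n z2) s2 z1 := hvs (n z2) z1 hs.le
  have h7 : v (n z2) s2 z1 ≤ v (n z2) s2 z2 := hvz (n z2) s2 hz.le
  linarith [h1v, h2v]

/-- Lemma A: uniqueness of the bottom match. The system `v (n z) s z = t_ℓ` and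
`c s z = t_ℓ` has at most one solution `(s, z)`. -/
theorem bottom_match_unique
    {S Z X : Type*} [LinearOrder S] [LinearOrder Z] [LinearOrder X]
    (n : Z → X) (hn : StrictMono n)
    (v : X → S → Z → ℝ)
    (hvs : ∀ (x : X) (z : Z), Monotone (fun s => v x s z))
    (hvx : ∀ (s : S) (z : Z), StrictMono (fun x => v x s z))
    (hvz : ∀ (x : X) (s : S), Monotone (fun z => v x s z))
    (c : S → Z → ℝ)
    (hcs : ∀ z : Z, StrictMono (fun s => c s z))
    (hcz : ∀ s : S, StrictAnti (fun z => c s z))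
    (tl : ℝ) :
    {p : S × Z | v (n p.2) p.1 p.2 = tl ∧ c p.1 p.2 = tl}.Subsingleton := by
  rintro ⟨s1, z1⟩ ⟨h1v, h1c⟩ ⟨s2, z2⟩ ⟨h2v, h2c⟩
  rcases lt_trichotomy z1 z2 with hz | hz | hz
  · exact absurd (bottom_match_aux n hn v hvs hvx hvz c hcs hcz tl s1 s2 z1 z2
      h1v h1c h2v h2c hz) not_false
  · subst hz
    have : s1 = s2 := (hcs z1).injective (by simp only at h1c h2c; rw [h1c, h2c])
    simp [this]
  · exact absurd (bottom_match_aux n hn v hvs hvx hvz c hcs hcz tl s2 s1 z2 z1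
      h2v h2c h1v h1c hz) not_false
end
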